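/- arXiv:1305.2618 — 3 statements merged into one kernel-verified Lean document; each statement's English description precedes it below -/
import Mathlib

section
/- If a Banach space Y is reflexive and every weakly convergent sequence in Y converges in norm, then Y is finite dimensional. -/
open NormedSpace Filter

/-- A sequence converges weakly to `y` if its pairing with every continuous
linear functional converges to the pairing of `y`. -/
def WeaklyConvergesTo {W : Type*} [NormedAddCommGroup W] [NormedSpace ℂ W]
    (x : ℕ → W) (y : W) : Prop :=
  ∀ φ : StrongDual ℂ W, Tendsto (fun m => φ (x m)) atTop (nhds (φ y))

/-- A Banach space is reflexive if the canonical embedding into its bidual is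
surjective. -/
def IsReflexiveSpace (W : Type*) [NormedAddCommGroup W] [NormedSpace ℂ W] : Prop :=
  Function.Surjective (inclusionInDoubleDual ℂ W)

/-- Annihilator functional: a point outside a closed submodule is separated by a functional
vanishing on the submodule. -/
lemma aux_annih {X : Type*} [NormedAddCommGroup X] [NormedSpace ℂ X]
    (W : Submodule ℂ X) (hW : IsClosed (W : Set X)) {y : X} (hy : y ∉ W) :
    ∃ ψ : StrongDual ℂ X, (∀ w, w ∈ W → ψ w = 0) ∧ ψ y ≠ 0 := by
  haveI : IsClosed (W : Set X) := hW
  let mkc : X →L[ℂ] (X ⧸ W) := W.mkQ.mkContinuous 1 (fun x => by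
    simpa using Submodule.Quotient.norm_mk_le W x)
  have hy0 : (Submodule.Quotient.mk y : X ⧸ W) ≠ 0 := by
    simpa [Submodule.Quotient.mk_eq_zero] using hy
  obtain ⟨g, -, hg⟩ := exists_dual_vector ℂ _ (norm_ne_zero_iff.2 hy0)
  refine ⟨g.comp mkc, fun w hw => ?_, ?_⟩
  · have : (Submodule.Quotient.mk w : X ⧸ W) = 0 := (Submodule.Quotient.mk_eq_zero W).2 hw
    simp [mkc, Submodule.mkQ_apply, this]
  · have h1 : ‖(Submodule.Quotient.mk y : X ⧸ W)‖ ≠ 0 := by simpa using hy0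
    have h2 : g.comp mkc y = (‖(Submodule.Quotient.mk y : X ⧸ W)‖ : ℂ) := by
      simp [mkc, Submodule.mkQ_apply, hg]
    rw [h2]
    exact_mod_cast h1

/-- If the dual of a normed space is separable, so is the space. -/
lemma aux_sep_of_dual_sep (X : Type*) [NormedAddCommGroup X] [NormedSpace ℂ X]
    [TopologicalSpace.SeparableSpace (StrongDual ℂ X)] :
    TopologicalSpace.SeparableSpace X := by
  obtain ⟨D, Dcnt, Ddense⟩ := TopologicalSpace.exists_countable_dense (StrongDual ℂ X)
  -- choose near-norming vectors
  have hch : ∀ g : StrongDual ℂ X, ∃ x : X, ‖x‖ ≤ 1 ∧ ‖g‖ / 2 ≤ ‖g x‖ := by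
    intro g
    rcases eq_or_ne g 0 with rfl | hg
    · exact ⟨0, by simp⟩
    · have : ‖g‖ / 2 < ‖g‖ := by
        have : 0 < ‖g‖ := norm_pos_iff.2 hg
        linarith
      obtain ⟨x, hx1, hx2⟩ := g.exists_lt_apply_of_lt_opNorm this
      exact ⟨x, hx1.le, hx2.le⟩
  choose v hv1 hv2 using hch
  set W : Submodule ℂ X := (Submodule.span ℂ (v '' D)).topologicalClosure with hWdef
  have hWtop : W = ⊤ := by
    by_contra hne
    obtain ⟨y, hy⟩ : ∃ y : X, y ∉ W := by
      by_contra h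
      push_neg at h
      exact hne (Submodule.eq_top_iff'.2 h)
    obtain ⟨ψ, hψ0, hψy⟩ := aux_annih W (Submodule.isClosed_topologicalClosure _) hy
    have hψpos : 0 < ‖ψ‖ := norm_pos_iff.2 (fun h => hψy (by simp [h]))
    obtain ⟨g, hgψ, hgD⟩ := Metric.dense_iff.1 Ddense ψ (‖ψ‖/3) (by linarith)
    have hgsub : ‖g - ψ‖ < ‖ψ‖ / 3 := by
      rw [← dist_eq_norm]
      exact Metric.mem_ball.1 hgψ
    have hgnorm : 2 * ‖ψ‖ / 3 ≤ ‖g‖ := by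
      have := norm_sub_norm_le g ψ
      have h2 : ‖ψ‖ - ‖g‖ ≤ ‖g - ψ‖ := by
        simpa [norm_sub_rev] using norm_sub_norm_le ψ g
      linarith
    have hvg0 : ψ (v g) = 0 := hψ0 _ (Submodule.le_topologicalClosure _
      (Submodule.subset_span ⟨g, hgD, rfl⟩))
    have h1 : ‖ψ‖ / 3 ≤ ‖g (v g)‖ := le_trans (by linarith) (hv2 g)
    have h2 : ‖g (v g)‖ < ‖ψ‖ / 3 := by
      have : g (v g) = (g - ψ) (v g) := by simp [hvg0]
      rw [this]
      calc ‖(g - ψ) (v g)‖ ≤ ‖g - ψ‖ * ‖v g‖ := (g - ψ).le_opNorm _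
        _ ≤ ‖g - ψ‖ * 1 := by
            exact mul_le_mul_of_nonneg_left (hv1 g) (norm_nonneg _)
        _ < ‖ψ‖ / 3 := by rw [mul_one]; exact hgsub
    linarith
  -- separability from the dense span of a countable set
  have hsep : TopologicalSpace.IsSeparable (W : Set X) :=
    (TopologicalSpace.IsSeparable.span ((Dcnt.image v).isSeparable)).closure
  rw [hWtop] at hsep
  rw [← TopologicalSpace.isSeparable_univ_iff]
  simpa using hsep

/-- A closed subspace of a reflexive space is reflexive. -/
lemma aux_sub_reflexive {Y : Type*} [NormedAddCommGroup Y] [NormedSpace ℂ Y]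
    (hrefl : Function.Surjective (inclusionInDoubleDual ℂ Y))
    (Z : Submodule ℂ Y) (hZ : IsClosed (Z : Set Y)) :
    Function.Surjective (inclusionInDoubleDual ℂ ↥Z) := by
  let rest : StrongDual ℂ Y →L[ℂ] StrongDual ℂ ↥Z :=
    (ContinuousLinearMap.compSL ↥Z Y ℂ (RingHom.id ℂ) (RingHom.id ℂ)).flip Z.subtypeL
  have rest_apply : ∀ (ψ : StrongDual ℂ Y) (z : ↥Z), rest ψ z = ψ z := fun _ _ => rfl
  intro F
  obtain ⟨y, hy⟩ := hrefl (F.comp rest)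
  have hyval : ∀ ψ : StrongDual ℂ Y, ψ y = F (rest ψ) := by
    intro ψ
    have h := congrArg (fun T : StrongDual ℂ (StrongDual ℂ Y) => T ψ) hy
    simpa [NormedSpace.dual_def] using h
  have hyZ : y ∈ Z := by
    by_contra hy'
    obtain ⟨ψ, hψ0, hψy⟩ := aux_annih Z hZ hy'
    have : rest ψ = 0 := by
      ext z
      exact hψ0 z z.2
    have := hyval ψ
    rw [this] at hψy
    simp [‹rest ψ = 0›] at hψy
  refine ⟨⟨y, hyZ⟩, ?_⟩
  ext φ
  obtain ⟨ψ, hψext, -⟩ := exists_extension_norm_eq Z φ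
  have h1 : rest ψ = φ := by
    ext z
    exact hψext z
  have h2 : φ ⟨y, hyZ⟩ = ψ y := (hψext ⟨y, hyZ⟩).symm
  simp only [NormedSpace.dual_def]
  rw [h2, hyval ψ, h1]

/-- A reflexive Banach space in which every weakly convergent sequence
converges in norm is finite dimensional. -/
theorem reflexive_schur_finiteDimensional
    (Y : Type*) [NormedAddCommGroup Y] [NormedSpace ℂ Y] [CompleteSpace Y]
    (hschur : ∀ (x : ℕ → Y) (y : Y), WeaklyConvergesTo x y →
      Tendsto x atTop (nhds y))
    (hrefl : IsReflexiveSpace Y) :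
    FiniteDimensional ℂ Y := by
  by_contra hfin
  obtain ⟨R, f, hR1, hfle, hsep⟩ := exists_seq_norm_le_one_le_norm_sub (𝕜 := ℂ) hfin
  have hR0 : (0 : ℝ) < R := lt_trans one_pos hR1
  set Z : Submodule ℂ Y := (Submodule.span ℂ (Set.range f)).topologicalClosure with hZdef
  have hZc : IsClosed (Z : Set Y) := Submodule.isClosed_topologicalClosure _
  have hfZ : ∀ n, f n ∈ Z := fun n =>
    Submodule.le_topologicalClosure _ (Submodule.subset_span (Set.mem_range_self n))
  set g : ℕ → ↥Z := fun n => ⟨f n, hfZ n⟩ with hgdef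
  have hgle : ∀ n, ‖g n‖ ≤ R := fun n => hfle n
  -- Z is separable
  have hZsep : TopologicalSpace.IsSeparable (Z : Set Y) :=
    (TopologicalSpace.IsSeparable.span (Set.countable_range f).isSeparable).closure
  haveI : TopologicalSpace.SeparableSpace ↥Z := hZsep.separableSpace
  -- Z is reflexive
  have hZrefl : Function.Surjective (inclusionInDoubleDual ℂ ↥Z) :=
    aux_sub_reflexive hrefl Z hZc
  -- the bidual of Z is separable, hence the dual of Z is separable
  haveI : TopologicalSpace.SeparableSpace (StrongDual ℂ (StrongDual ℂ ↥Z)) :=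
    (hZrefl.denseRange).separableSpace (inclusionInDoubleDual ℂ ↥Z).continuous
  haveI : TopologicalSpace.SeparableSpace (StrongDual ℂ ↥Z) := aux_sep_of_dual_sep (StrongDual ℂ ↥Z)
  set φseq : ℕ → StrongDual ℂ ↥Z := TopologicalSpace.denseSeq (StrongDual ℂ ↥Z) with hφdef
  have hφdense : DenseRange φseq := TopologicalSpace.denseRange_denseSeq _
  -- diagonal extraction via compactness of a product of balls in ℂ^ℕ
  set u : ℕ → (ℕ → ℂ) := fun k j => φseq j (g k) with hudef
  have hu : ∀ k, u k ∈ Set.pi Set.univ (fun j => Metric.closedBall (0 : ℂ) (‖φseq j‖ * R)) := by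
    intro k j _
    simp only [Metric.mem_closedBall, dist_zero_right]
    calc ‖φseq j (g k)‖ ≤ ‖φseq j‖ * ‖g k‖ := (φseq j).le_opNorm _
      _ ≤ ‖φseq j‖ * R := mul_le_mul_of_nonneg_left (hgle k) (norm_nonneg (φseq j))
  have hcomp : IsCompact (Set.pi Set.univ fun j => Metric.closedBall (0 : ℂ) (‖φseq j‖ * R)) :=
    isCompact_univ_pi fun j => isCompact_closedBall _ _
  obtain ⟨L, -, θ, hθ, hconv⟩ := hcomp.tendsto_subseq hu
  have hcoord : ∀ j, Tendsto (fun k => φseq j (g (θ k))) atTop (nhds (L j)) := by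
    rw [tendsto_pi_nhds] at hconv
    exact fun j => hconv j
  -- every functional converges along the subsequence
  have hcauchy : ∀ φ : StrongDual ℂ ↥Z, CauchySeq (fun k => φ (g (θ k))) := by
    intro φ
    rw [Metric.cauchySeq_iff]
    intro ε hε
    obtain ⟨j, hj⟩ := Metric.denseRange_iff.1 hφdense φ (ε / (3 * R))
      (div_pos hε (by linarith))
    have hclose : ∀ k, dist (φ (g (θ k))) (φseq j (g (θ k))) ≤ ε / 3 := by
      intro k
      rw [dist_eq_norm]
      have : φ (g (θ k)) - φseq j (g (θ k)) = (φ - φseq j) (g (θ k)) := by simp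
      rw [this]
      calc ‖(φ - φseq j) (g (θ k))‖ ≤ ‖φ - φseq j‖ * ‖g (θ k)‖ := (φ - φseq j).le_opNorm _
        _ ≤ ‖φ - φseq j‖ * R :=
            mul_le_mul_of_nonneg_left (hgle _) (norm_nonneg (φ - φseq j))
        _ ≤ ε / (3 * R) * R := by
            have : ‖φ - φseq j‖ ≤ ε / (3 * R) := by
              rw [← dist_eq_norm φ (φseq j)]
              exact hj.le
            exact mul_le_mul_of_nonneg_right this hR0.le
        _ = ε / 3 := by field_simp
    have hcj := (hcoord j).cauchySeq
    rw [Metric.cauchySeq_iff] at hcj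
    obtain ⟨N, hN⟩ := hcj (ε / 3) (by linarith)
    refine ⟨N, fun m hm n hn => ?_⟩
    calc dist (φ (g (θ m))) (φ (g (θ n)))
        ≤ dist (φ (g (θ m))) (φseq j (g (θ m))) +
          dist (φseq j (g (θ m))) (φseq j (g (θ n))) +
          dist (φseq j (g (θ n))) (φ (g (θ n))) := dist_triangle4 _ _ _ _
      _ < ε / 3 + ε / 3 + ε / 3 := by
          have h1 := hclose m
          have h2 := hN m hm n hn
          have h3 := hclose n
          rw [dist_comm] at h3
          linarith
      _ = ε := by ring
  have hex : ∀ φ : StrongDual ℂ ↥Z, ∃ c : ℂ, Tendsto (fun k => φ (g (θ k))) atTop (nhds c) :=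
    fun φ => cauchySeq_tendsto_of_complete (hcauchy φ)
  choose lim hlim using hex
  -- the limit functional
  let F0 : StrongDual ℂ ↥Z →ₗ[ℂ] ℂ :=
    { toFun := lim
      map_add' := fun φ ψ => by
        refine tendsto_nhds_unique (hlim (φ + ψ)) ?_
        have := (hlim φ).add (hlim ψ)
        simpa using this
      map_smul' := fun c φ => by
        refine tendsto_nhds_unique (hlim (c • φ)) ?_
        have := (hlim φ).const_mul c
        simpa [smul_eq_mul] using this }
  have hFbound : ∀ φ : StrongDual ℂ ↥Z, ‖F0 φ‖ ≤ R * ‖φ‖ := by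
    intro φ
    refine le_of_tendsto (hlim φ).norm (Eventually.of_forall fun k => ?_)
    calc ‖φ (g (θ k))‖ ≤ ‖φ‖ * ‖g (θ k)‖ := φ.le_opNorm _
      _ ≤ ‖φ‖ * R := mul_le_mul_of_nonneg_left (hgle _) (norm_nonneg φ)
      _ = R * ‖φ‖ := mul_comm _ _
  let F : StrongDual ℂ (StrongDual ℂ ↥Z) := LinearMap.mkContinuous (𝕜 := ℂ) (𝕜₂ := ℂ) (E := StrongDual ℂ ↥Z) (F := ℂ) (σ := RingHom.id ℂ) F0 R hFbound
  obtain ⟨z, hz⟩ := hZrefl F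
  have hzval : ∀ φ : StrongDual ℂ ↥Z, φ z = lim φ := by
    intro φ
    have h := congrArg (fun T : StrongDual ℂ (StrongDual ℂ ↥Z) => T φ) hz
    simpa [NormedSpace.dual_def, F, F0] using h
  -- weak convergence in Y
  have hweak : WeaklyConvergesTo (fun k => ((g (θ k) : ↥Z) : Y)) (z : Y) := by
    intro ψ
    set φ : StrongDual ℂ ↥Z := ψ.comp Z.subtypeL with hφ'
    have h1 : ∀ k, ψ ((g (θ k) : ↥Z) : Y) = φ (g (θ k)) := fun k => rfl
    have h2 : ψ (z : Y) = φ z := rfl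
    simp only [h1, h2, hzval φ]
    exact hlim φ
  have hnorm := hschur _ _ hweak
  have hC := hnorm.cauchySeq
  rw [Metric.cauchySeq_iff] at hC
  obtain ⟨N, hN⟩ := hC 1 one_pos
  have h1 : dist ((g (θ (N + 1)) : ↥Z) : Y) ((g (θ N) : ↥Z) : Y) < 1 :=
    hN (N + 1) (Nat.le_succ N) N le_rfl
  have h2 : (1 : ℝ) ≤ ‖f (θ (N + 1)) - f (θ N)‖ :=
    hsep (hθ (Nat.lt_succ_self N)).ne'
  rw [dist_eq_norm] at h1
  have : ((g (θ (N + 1)) : ↥Z) : Y) - ((g (θ N) : ↥Z) : Y) = f (θ (N + 1)) - f (θ N) := rfl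
  rw [this] at h1
  linarith
end

section
/- Let W be a weakly sequentially complete Banach space and T : W → C₀(ℝⁿ) a bounded, linear, injective map. Let Y be a closed subspace of C₀(ℝⁿ) contained in T(W). Then there exist positive numbers α and C, independent of F ∈ Y, such that ‖F‖_∞ ≤ C · sup{|F(ξ)| : |ξ| ≤ α} for all F ∈ Y. -/
set_option maxHeartbeats 1000000
set_option synthInstance.maxHeartbeats 200000


open NormedSpace Filter ZeroAtInfty ZeroAtInftyContinuousMap

/-- A sequence is weakly Cauchy if its pairing with every continuous linear
functional is a Cauchy sequence of scalars. -/
def WeaklyCauchy {W : Type*} [NormedAddCommGroup W] [NormedSpace ℂ W]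
    (x : ℕ → W) : Prop :=
  ∀ φ : StrongDual ℂ W, CauchySeq fun m => φ (x m)

/-- A space is weakly sequentially complete if every weakly Cauchy sequence
converges weakly. -/
def WeaklySeqComplete (W : Type*) [NormedAddCommGroup W] [NormedSpace ℂ W] : Prop :=
  ∀ x : ℕ → W, WeaklyCauchy x → ∃ y : W, WeaklyConvergesTo x y

lemma C0_norm_apply_le {α : Type*} [TopologicalSpace α] (f : C₀(α, ℂ)) (x : α) :
    ‖f x‖ ≤ ‖f‖ := by
  rw [← norm_toBCF_eq_norm]
  exact f.toBCF.norm_coe_le_norm x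

lemma C0_norm_le {α : Type*} [TopologicalSpace α] (f : C₀(α, ℂ)) {M : ℝ} (hM : 0 ≤ M)
    (h : ∀ x, ‖f x‖ ≤ M) : ‖f‖ ≤ M := by
  rw [← norm_toBCF_eq_norm]
  exact (BoundedContinuousFunction.norm_le hM).2 h

noncomputable def evalC0 {α : Type*} [TopologicalSpace α] (x : α) :
    C₀(α, ℂ) →L[ℂ] ℂ :=
  LinearMap.mkContinuous
    { toFun := fun f => f x
      map_add' := fun f g => rfl
      map_smul' := fun c f => rfl }
    1 (fun f => by simpa using C0_norm_apply_le f x)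

@[simp] lemma evalC0_apply {α : Type*} [TopologicalSpace α] (x : α) (f : C₀(α, ℂ)) :
    evalC0 x f = f x := rfl

lemma exists_continuous_inverse {V W : Type*} [NormedAddCommGroup V] [NormedSpace ℂ V]
    [CompleteSpace V] [NormedAddCommGroup W] [NormedSpace ℂ W] [CompleteSpace W]
    (T : W →L[ℂ] V) (hT : Function.Injective T) (Y : Subspace ℂ V)
    (hclosed : IsClosed (Y : Set V)) (hsub : (Y : Set V) ⊆ Set.range T) :
    ∃ S : Y →L[ℂ] W, ∀ y : Y, T (S y) = (y : V) := by
  haveI : CompleteSpace Y := hclosed.completeSpace_coe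
  have hTS : ∀ y : Y, ∃ w : W, T w = (y : V) := fun y => hsub y.2
  let Slin : Y →ₗ[ℂ] W :=
    { toFun := fun y => Classical.choose (hTS y)
      map_add' := by
        intro y z
        apply hT
        simp only [map_add, Classical.choose_spec (hTS _)]
        rfl
      map_smul' := by
        intro c y
        apply hT
        simp only [map_smul, Classical.choose_spec (hTS _), RingHom.id_apply]
        rfl }
  have hS : ∀ y : Y, T (Slin y) = (y : V) := fun y => Classical.choose_spec (hTS y)
  have hgraph : ∀ (u : ℕ → Y) (x : Y) (y : W), Tendsto u atTop (nhds x) →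
      Tendsto (Slin ∘ u) atTop (nhds y) → y = Slin x := by
    intro u x y hux huy
    apply hT
    rw [hS x]
    have h1 : Tendsto (fun m => T (Slin (u m))) atTop (nhds (T y)) :=
      (T.continuous.tendsto _).comp huy
    have h2 : Tendsto (fun m => T (Slin (u m))) atTop (nhds (x : V)) := by
      have h3 : Tendsto (fun m => ((u m : V))) atTop (nhds (x : V)) :=
        (continuous_subtype_val.tendsto _).comp hux
      refine h3.congr fun m => (hS (u m)).symm
    exact tendsto_nhds_unique h1 h2
  exact ⟨⟨Slin, LinearMap.continuous_of_seq_closed_graph Slin hgraph⟩, hS⟩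

/-- If `W` is weakly sequentially complete, `T : W → C₀(ℝⁿ)` is bounded linear
and injective, and `Y` is a closed subspace of `C₀(ℝⁿ)` contained in `T(W)`,
then the sup norm on `Y` is controlled by the sup over a fixed ball. -/
theorem norm_le_ball_sup_of_weaklySeqComplete {n : ℕ}
    (W : Type*) [NormedAddCommGroup W] [NormedSpace ℂ W] [CompleteSpace W]
    (hW : WeaklySeqComplete W)
    (T : W →L[ℂ] C₀(EuclideanSpace ℝ (Fin n), ℂ)) (hT : Function.Injective T)
    (Y : Subspace ℂ C₀(EuclideanSpace ℝ (Fin n), ℂ))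
    (hclosed : IsClosed (Y : Set C₀(EuclideanSpace ℝ (Fin n), ℂ)))
    (hsub : (Y : Set C₀(EuclideanSpace ℝ (Fin n), ℂ)) ⊆ Set.range T) :
    ∃ α > (0 : ℝ), ∃ C > (0 : ℝ), ∀ F ∈ Y,
      ‖F‖ ≤ C * ⨆ ξ : Metric.closedBall (0 : EuclideanSpace ℝ (Fin n)) α, ‖F ↑ξ‖ := by
  by_contra hcon
  push_neg at hcon
  set E := EuclideanSpace ℝ (Fin n) with hE
  obtain ⟨S, hS⟩ := exists_continuous_inverse T hT Y hclosed hsub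
  -- the small constants
  set δ : ℕ → ℝ := fun j => (1/8 : ℝ) * (1/2) ^ j with hδ
  have hδpos : ∀ j, 0 < δ j := fun j => by positivity
  have hδsummable : Summable δ :=
    (summable_geometric_of_lt_one (by norm_num) (by norm_num)).mul_left _
  have hδtsum : ∑' j, δ j = 1/4 := by
    rw [hδ, tsum_mul_left, tsum_geometric_of_lt_one (by norm_num) (by norm_num)]
    norm_num
  have hδ8 : ∀ j, δ j ≤ 1/8 := by
    intro j
    have h1 : (1/2 : ℝ) ^ j ≤ 1 := pow_le_one₀ (by norm_num) (by norm_num)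
    rw [hδ]
    nlinarith
  -- key step : a normalized function in Y that is small on the ball of radius α
  -- and small outside a bigger ball
  have key : ∀ (j : ℕ) (α : ℝ), 0 < α → ∃ (F : C₀(E, ℂ)) (b : ℝ),
      F ∈ Y ∧ ‖F‖ = 1 ∧ (∀ ξ : E, ‖ξ‖ ≤ α → ‖F ξ‖ ≤ δ j) ∧ α ≤ b ∧
        (∀ ξ : E, b ≤ ‖ξ‖ → ‖F ξ‖ ≤ δ j) := by
    intro j α hα
    obtain ⟨F0, hF0Y, hF0⟩ := hcon α hα (1 / δ j) (by positivity)
    set s := ⨆ ξ : Metric.closedBall (0 : E) α, ‖F0 ↑ξ‖ with hs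
    have hbdd : BddAbove (Set.range fun ξ : Metric.closedBall (0 : E) α => ‖F0 ↑ξ‖) := by
      refine ⟨‖F0‖, ?_⟩
      rintro - ⟨ξ, rfl⟩
      exact C0_norm_apply_le F0 _
    have hle : ∀ ξ : E, ‖ξ‖ ≤ α → ‖F0 ξ‖ ≤ s := by
      intro ξ hξ
      exact le_ciSup hbdd (⟨ξ, by simpa [Metric.mem_closedBall, dist_eq_norm] using hξ⟩ :
        Metric.closedBall (0 : E) α)
    have hs0 : 0 ≤ s := le_trans (norm_nonneg _) (hle 0 (by simp [hα.le]))
    have hF0pos : 0 < ‖F0‖ := lt_of_le_of_lt (by positivity) hF0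
    have hsmall : ∀ ξ : E, ‖ξ‖ ≤ α → ‖F0 ξ‖ ≤ δ j * ‖F0‖ := by
      intro ξ hξ
      refine (hle ξ hξ).trans ?_
      have h1 : (1 / δ j) * s < ‖F0‖ := hF0
      have h2 : 0 < δ j := hδpos j
      rw [div_mul_eq_mul_div, one_mul, div_lt_iff₀ h2] at h1
      nlinarith
    set F : C₀(E, ℂ) := (‖F0‖⁻¹ : ℂ) • F0 with hF
    have hFval : ∀ ξ : E, ‖F ξ‖ = ‖F0‖⁻¹ * ‖F0 ξ‖ := by
      intro ξ
      have : F ξ = (‖F0‖⁻¹ : ℂ) • F0 ξ := rfl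
      rw [this, norm_smul]
      simp [abs_of_nonneg (inv_nonneg.2 (norm_nonneg F0))]
    have hFnorm : ‖F‖ = 1 := by
      rw [hF]
      have h1 : ‖(‖F0‖⁻¹ : ℂ) • F0‖ = ‖(‖F0‖⁻¹ : ℂ)‖ * ‖F0‖ := norm_smul ((‖F0‖ : ℂ))⁻¹ F0
      rw [h1, norm_inv, Complex.norm_real, Real.norm_eq_abs, abs_of_nonneg (norm_nonneg F0)]
      exact inv_mul_cancel₀ hF0pos.ne'
    have hFsmall : ∀ ξ : E, ‖ξ‖ ≤ α → ‖F ξ‖ ≤ δ j := by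
      intro ξ hξ
      rw [hFval]
      have := hsmall ξ hξ
      rw [inv_mul_le_iff₀ hF0pos]
      linarith [this]
    -- choose the outer radius from vanishing at infinity
    have hzero : Tendsto (fun ξ : E => ‖F ξ‖) (cocompact E) (nhds 0) := by
      simpa using (zero_at_infty F).norm
    have hev : ∀ᶠ ξ : E in cocompact E, ‖F ξ‖ < δ j := by
      have := Metric.tendsto_nhds.mp hzero (δ j) (hδpos j)
      refine this.mono fun ξ h => ?_
      simpa [Real.dist_eq, abs_of_nonneg (norm_nonneg (F ξ))] using h
    obtain ⟨K, hK, hKsub⟩ := hasBasis_cocompact.eventually_iff.mp hev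
    obtain ⟨r, hr⟩ := hK.isBounded.subset_closedBall (0 : E)
    refine ⟨F, max α (r + 1), Y.smul_mem _ hF0Y, hFnorm, hFsmall, le_max_left _ _, ?_⟩
    intro ξ hξ
    have hξK : ξ ∉ K := by
      intro hmem
      have := hr hmem
      rw [Metric.mem_closedBall, dist_zero_right] at this
      have h2 : r + 1 ≤ ‖ξ‖ := le_trans (le_max_right _ _) hξ
      linarith
    exact (hKsub hξK).le
  -- make choice proof-free
  have key' : ∀ (j : ℕ) (α : ℝ), ∃ (F : C₀(E, ℂ)) (b : ℝ), 0 < α →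
      (F ∈ Y ∧ ‖F‖ = 1 ∧ (∀ ξ : E, ‖ξ‖ ≤ α → ‖F ξ‖ ≤ δ j) ∧ α ≤ b ∧
        (∀ ξ : E, b ≤ ‖ξ‖ → ‖F ξ‖ ≤ δ j)) := by
    intro j α
    by_cases hcase : 0 < α
    · obtain ⟨F, b, hh⟩ := key j α hcase
      exact ⟨F, b, fun _ => hh⟩
    · exact ⟨0, 0, fun h' => absurd h' hcase⟩
  choose Ffun bfun hkey using key'
  -- the recursively defined radii
  set a : ℕ → ℝ := fun j => Nat.rec (1 : ℝ) (fun i ai => bfun i ai + 3) j with ha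
  set F : ℕ → C₀(E, ℂ) := fun j => Ffun j (a j) with hFdef
  set b : ℕ → ℝ := fun j => bfun j (a j) with hbdef
  have harec : ∀ j, a (j + 1) = b j + 3 := fun j => rfl
  have ha0 : a 0 = 1 := rfl
  have hapos : ∀ j, 0 < a j := by
    intro j
    induction j with
    | zero => rw [ha0]; norm_num
    | succ i ih =>
      have hib : a i ≤ b i := (hkey i (a i) ih).2.2.2.1
      rw [harec i]
      linarith
  have hprops : ∀ j, F j ∈ Y ∧ ‖F j‖ = 1 ∧ (∀ ξ : E, ‖ξ‖ ≤ a j → ‖F j ξ‖ ≤ δ j) ∧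
      a j ≤ b j ∧ (∀ ξ : E, b j ≤ ‖ξ‖ → ‖F j ξ‖ ≤ δ j) := fun j => hkey j (a j) (hapos j)
  have hmemY : ∀ j, F j ∈ Y := fun j => (hprops j).1
  have hFnorm1 : ∀ j, ‖F j‖ = 1 := fun j => (hprops j).2.1
  have hFin : ∀ j (ξ : E), ‖ξ‖ ≤ a j → ‖F j ξ‖ ≤ δ j := fun j => (hprops j).2.2.1
  have hab : ∀ j, a j ≤ b j := fun j => (hprops j).2.2.2.1
  have hFout : ∀ j (ξ : E), b j ≤ ‖ξ‖ → ‖F j ξ‖ ≤ δ j := fun j => (hprops j).2.2.2.2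
  have hasucc : ∀ j, a j + 3 ≤ a (j + 1) := by
    intro j; rw [harec j]; linarith [hab j]
  have hamono : Monotone a := monotone_nat_of_le_succ fun j => by linarith [hasucc j]
  have hba : ∀ i j, i < j → b i + 3 ≤ a j := by
    intro i j hij
    calc b i + 3 = a (i + 1) := (harec i).symm
    _ ≤ a j := hamono hij
  have hage : ∀ j : ℕ, (j : ℝ) ≤ a j := by
    intro j
    induction j with
    | zero => rw [ha0]; norm_num
    | succ i ih => push_cast; linarith [hasucc i]
  -- the cutoff functions
  set χ : ℕ → E → ℝ := fun j ξ => max 0 (min (min (‖ξ‖ - (a j - 1)) 1) (b j + 1 - ‖ξ‖)) with hχ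
  have hχ0 : ∀ j ξ, 0 ≤ χ j ξ := fun j ξ => le_max_left _ _
  have hχle1 : ∀ j ξ, χ j ξ ≤ 1 := by
    intro j ξ
    apply max_le (by norm_num)
    exact le_trans (min_le_left _ _) (min_le_right _ _)
  have hχeq1 : ∀ j (ξ : E), a j ≤ ‖ξ‖ → ‖ξ‖ ≤ b j → χ j ξ = 1 := by
    intro j ξ h1 h2
    have e1 : min (‖ξ‖ - (a j - 1)) 1 = 1 := min_eq_right (by linarith)
    show max 0 (min (min (‖ξ‖ - (a j - 1)) 1) (b j + 1 - ‖ξ‖)) = 1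
    rw [e1, min_eq_left (by linarith), max_eq_right (by norm_num)]
  have hχsupp : ∀ j (ξ : E), χ j ξ ≠ 0 → a j - 1 ≤ ‖ξ‖ ∧ ‖ξ‖ ≤ b j + 1 := by
    intro j ξ hne
    constructor
    · by_contra hc
      push_neg at hc
      apply hne
      apply max_eq_left
      calc min (min (‖ξ‖ - (a j - 1)) 1) (b j + 1 - ‖ξ‖)
          ≤ min (‖ξ‖ - (a j - 1)) 1 := min_le_left _ _
        _ ≤ ‖ξ‖ - (a j - 1) := min_le_left _ _
        _ ≤ 0 := by linarith
    · by_contra hc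
      push_neg at hc
      exact hne (max_eq_left (le_trans (min_le_right _ _) (by linarith)))
  have hχcont : ∀ j, Continuous fun ξ : E => χ j ξ := fun j =>
    continuous_const.max (((continuous_norm.sub continuous_const).min
      continuous_const).min (continuous_const.sub continuous_norm))
  have hχdisj : ∀ (i j : ℕ) (ξ : E), i < j → χ i ξ ≠ 0 → χ j ξ ≠ 0 → False := by
    intro i j ξ hij hi hj
    obtain ⟨-, h2⟩ := hχsupp i ξ hi
    obtain ⟨h3, -⟩ := hχsupp j ξ hj
    have := hba i j hij
    linarith
  -- the localized pieces
  have hPzero : ∀ j, Tendsto (fun ξ : E => χ j ξ • F j ξ) (cocompact E) (nhds 0) := by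
    intro j
    apply squeeze_zero_norm (a := fun ξ : E => ‖F j ξ‖)
    · intro ξ
      have he : ‖χ j ξ • F j ξ‖ = ‖χ j ξ‖ * ‖F j ξ‖ := norm_smul (χ j ξ) (F j ξ)
      rw [he, Real.norm_eq_abs, abs_of_nonneg (hχ0 j ξ)]
      exact mul_le_of_le_one_left (norm_nonneg _) (hχle1 j ξ)
    · simpa using (zero_at_infty (F j)).norm
  set P : ℕ → C₀(E, ℂ) := fun j =>
    { toContinuousMap := ⟨fun ξ => χ j ξ • F j ξ, (hχcont j).smul (map_continuous (F j))⟩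
      zero_at_infty' := hPzero j } with hP
  have hPapply : ∀ j ξ, P j ξ = χ j ξ • F j ξ := fun j ξ => rfl
  have hPle : ∀ j ξ, ‖P j ξ‖ ≤ ‖F j ξ‖ := by
    intro j ξ
    rw [hPapply]
    have he : ‖χ j ξ • F j ξ‖ = ‖χ j ξ‖ * ‖F j ξ‖ := norm_smul (χ j ξ) (F j ξ)
    rw [he, Real.norm_eq_abs, abs_of_nonneg (hχ0 j ξ)]
    exact mul_le_of_le_one_left (norm_nonneg _) (hχle1 j ξ)
  have hFPdiff : ∀ j, ‖F j - P j‖ ≤ δ j := by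
    intro j
    apply C0_norm_le _ (hδpos j).le
    intro ξ
    have hsubv : (F j - P j) ξ = F j ξ - χ j ξ • F j ξ := rfl
    have h1 : F j ξ - χ j ξ • F j ξ = (1 - χ j ξ) • F j ξ := by
      rw [sub_smul, one_smul]
    have he : ‖(1 - χ j ξ) • F j ξ‖ = ‖1 - χ j ξ‖ * ‖F j ξ‖ := norm_smul _ _
    rw [hsubv, h1, he, Real.norm_eq_abs,
      abs_of_nonneg (by linarith [hχle1 j ξ] : (0:ℝ) ≤ 1 - χ j ξ)]
    rcases le_or_gt (‖ξ‖) (a j) with hc | hc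
    · exact le_trans (mul_le_of_le_one_left (norm_nonneg _) (by linarith [hχ0 j ξ]))
        (hFin j ξ hc)
    rcases le_or_gt (b j) (‖ξ‖) with hc2 | hc2
    · exact le_trans (mul_le_of_le_one_left (norm_nonneg _) (by linarith [hχ0 j ξ]))
        (hFout j ξ hc2)
    · rw [hχeq1 j ξ hc.le hc2.le]
      simpa using (hδpos j).le
  -- the preimages in W and the partial sums
  set g : ℕ → W := fun j => S ⟨F j, hmemY j⟩ with hgdef
  have hTg : ∀ j, T (g j) = F j := fun j => hS ⟨F j, hmemY j⟩
  set hseq : ℕ → W := fun N => ∑ j ∈ Finset.range N, g j with hhseq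
  have hcauchy : WeaklyCauchy hseq := by
    intro φ
    obtain ⟨Λ, hΛ, -⟩ := exists_extension_norm_eq Y (φ.comp S)
    have hφg : ∀ j, φ (g j) = Λ (F j) := by
      intro j
      rw [hΛ ⟨F j, hmemY j⟩]
      rfl
    have hsumP : ∀ N : ℕ, ∑ j ∈ Finset.range N, ‖Λ (P j)‖ ≤ ‖Λ‖ := by
      intro N
      set ε : ℕ → ℂ := fun j =>
        if h0 : Λ (P j) = 0 then 1 else (starRingEnd ℂ) (Λ (P j)) / ‖Λ (P j)‖ with hε
      have hε1 : ∀ j, ‖ε j‖ ≤ 1 := by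
        intro j
        rw [hε]
        dsimp only
        split_ifs with h0
        · simp
        · rw [norm_div, RCLike.norm_conj, Complex.norm_real, Real.norm_eq_abs,
            abs_of_nonneg (norm_nonneg _)]
          exact le_of_eq (div_self (norm_ne_zero_iff.2 h0))
      have hεΛ : ∀ j, Λ (ε j • P j) = ((‖Λ (P j)‖ : ℝ) : ℂ) := by
        intro j
        rw [map_smul, smul_eq_mul, hε]
        dsimp only
        split_ifs with h0
        · simp [h0]
        · rw [div_mul_eq_mul_div, mul_comm, Complex.mul_conj]
          rw [Complex.normSq_eq_norm_sq]
          push_cast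
          rw [sq, mul_div_assoc, div_self (Complex.ofReal_ne_zero.2 (norm_ne_zero_iff.2 h0)),
            mul_one]
      have hsumnorm : ‖∑ j ∈ Finset.range N, ε j • P j‖ ≤ 1 := by
        apply C0_norm_le _ zero_le_one
        intro ξ
        have hval : (∑ j ∈ Finset.range N, ε j • P j) ξ
            = ∑ j ∈ Finset.range N, ε j • P j ξ := by
          rw [← evalC0_apply ξ, map_sum]
          rfl
        by_cases hex : ∃ j₀ ∈ Finset.range N, χ j₀ ξ ≠ 0
        · obtain ⟨j₀, hj₀, hjne⟩ := hex
          rw [hval, Finset.sum_eq_single_of_mem j₀ hj₀ ?_]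
          · calc ‖ε j₀ • P j₀ ξ‖ = ‖ε j₀‖ * ‖P j₀ ξ‖ := norm_smul _ _
              _ ≤ 1 * 1 := by
                  apply mul_le_mul (hε1 j₀) ?_ (norm_nonneg _) zero_le_one
                  exact le_trans (hPle j₀ ξ)
                    (le_trans (C0_norm_apply_le _ _) (le_of_eq (hFnorm1 j₀)))
              _ = 1 := one_mul 1
          · intro i hi hne
            have hχi : χ i ξ = 0 := by
              by_contra hc
              rcases lt_or_gt_of_ne hne with hlt | hlt
              · exact hχdisj i j₀ ξ hlt hc hjne
              · exact hχdisj j₀ i ξ hlt hjne hc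
            rw [hPapply i ξ, hχi, zero_smul, smul_zero]
        · push_neg at hex
          rw [hval, Finset.sum_eq_zero ?_]
          · simp
          · intro i hi
            rw [hPapply i ξ, hex i hi, zero_smul, smul_zero]
      have hsum2 : Λ (∑ j ∈ Finset.range N, ε j • P j)
          = ((∑ j ∈ Finset.range N, ‖Λ (P j)‖ : ℝ) : ℂ) := by
        rw [map_sum, Complex.ofReal_sum]
        exact Finset.sum_congr rfl fun j _ => hεΛ j
      have hcalc : (∑ j ∈ Finset.range N, ‖Λ (P j)‖)
          = ‖Λ (∑ j ∈ Finset.range N, ε j • P j)‖ := by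
        rw [hsum2, Complex.norm_real, Real.norm_eq_abs,
          abs_of_nonneg (Finset.sum_nonneg fun j _ => norm_nonneg _)]
      rw [hcalc]
      calc ‖Λ (∑ j ∈ Finset.range N, ε j • P j)‖
          ≤ ‖Λ‖ * ‖∑ j ∈ Finset.range N, ε j • P j‖ := Λ.le_opNorm _
        _ ≤ ‖Λ‖ * 1 := by
            exact mul_le_mul_of_nonneg_left hsumnorm (norm_nonneg _)
        _ = ‖Λ‖ := mul_one _
    have hΛF : ∀ j, ‖Λ (F j)‖ ≤ ‖Λ (P j)‖ + ‖Λ‖ * δ j := by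
      intro j
      have hsplit : Λ (F j) = Λ (P j) + Λ (F j - P j) := by
        rw [map_sub]; ring
      rw [hsplit]
      refine (norm_add_le _ _).trans (add_le_add_right ?_ _)
      exact (Λ.le_opNorm _).trans (mul_le_mul_of_nonneg_left (hFPdiff j) (norm_nonneg _))
    have hsummableP : Summable fun j => ‖Λ (P j)‖ :=
      summable_of_sum_range_le (fun _ => norm_nonneg _) hsumP
    have hsummableF : Summable fun j => Λ (F j) := by
      apply Summable.of_norm
      apply Summable.of_nonneg_of_le (fun _ => norm_nonneg _) hΛF
      exact hsummableP.add (hδsummable.mul_left _)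
    have heq : ∀ N, φ (hseq N) = ∑ j ∈ Finset.range N, Λ (F j) := by
      intro N
      rw [hhseq]
      dsimp only
      rw [map_sum]
      exact Finset.sum_congr rfl fun j _ => hφg j
    have htend := hsummableF.hasSum.tendsto_sum_nat
    exact ((htend.congr (fun N => (heq N).symm)).cauchySeq)
  -- the weak limit
  obtain ⟨y, hy⟩ := hW hseq hcauchy
  have htendpt : ∀ ξ : E, Tendsto (fun N => ∑ j ∈ Finset.range N, F j ξ)
      atTop (nhds (T y ξ)) := by
    intro ξ
    have h1 := hy ((evalC0 ξ).comp T)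
    simp only [ContinuousLinearMap.comp_apply, evalC0_apply] at h1
    have hval : ∀ N, T (hseq N) ξ = ∑ j ∈ Finset.range N, F j ξ := by
      intro N
      have hTh : T (hseq N) = ∑ j ∈ Finset.range N, F j := by
        rw [hhseq]
        dsimp only
        rw [map_sum]
        exact Finset.sum_congr rfl fun j _ => hTg j
      rw [hTh, ← evalC0_apply ξ, map_sum]
      rfl
    exact h1.congr hval
  -- points where the F k are large
  have hηex : ∀ k, ∃ ηp : E, 1/2 < ‖F k ηp‖ := by
    intro k
    by_contra hc
    push_neg at hc
    have := C0_norm_le (F k) (by norm_num) hc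
    rw [hFnorm1 k] at this
    norm_num at this
  choose η hη using hηex
  have hηa : ∀ k, a k < ‖η k‖ := by
    intro k
    by_contra hc
    push_neg at hc
    have h1 := hFin k (η k) hc
    have h8 := hδ8 k
    linarith [hη k]
  have hηb : ∀ k, ‖η k‖ < b k := by
    intro k
    by_contra hc
    push_neg at hc
    have h1 := hFout k (η k) hc
    linarith [hη k, hδ8 k]
  have hsumlow : ∀ k N, k < N → 1/4 ≤ ‖∑ j ∈ Finset.range N, F j (η k)‖ := by
    intro k N hkN
    have hkmem : k ∈ Finset.range N := Finset.mem_range.2 hkN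
    have hsplit : ∑ j ∈ Finset.range N, F j (η k)
        = F k (η k) + ∑ j ∈ (Finset.range N).erase k, F j (η k) :=
      (Finset.add_sum_erase _ _ hkmem).symm
    have hrest : ‖∑ j ∈ (Finset.range N).erase k, F j (η k)‖ ≤ 1/4 := by
      refine le_trans (norm_sum_le _ _) ?_
      have hterm : ∀ j ∈ (Finset.range N).erase k, ‖F j (η k)‖ ≤ δ j := by
        intro j hj
        have hjne : j ≠ k := Finset.ne_of_mem_erase hj
        rcases lt_or_gt_of_ne hjne with hlt | hlt
        · apply hFout
          have := hba j k hlt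
          linarith [hηa k]
        · apply hFin
          have := hba k j hlt
          linarith [hηb k]
      refine le_trans (Finset.sum_le_sum hterm) ?_
      refine le_trans (Finset.sum_le_sum_of_subset_of_nonneg (Finset.erase_subset _ _)
        (fun j _ _ => (hδpos j).le)) ?_
      refine le_trans (Summable.sum_le_tsum (Finset.range N) (fun j _ => (hδpos j).le) hδsummable) ?_
      rw [hδtsum]
    have h1 : ‖F k (η k)‖ ≤ ‖∑ j ∈ Finset.range N, F j (η k)‖
        + ‖∑ j ∈ (Finset.range N).erase k, F j (η k)‖ := by
      rw [hsplit]
      exact norm_le_add_norm_add _ _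
    linarith [hη k]
  have hTylow : ∀ k, 1/4 ≤ ‖T y (η k)‖ := by
    intro k
    have h2 : Tendsto (fun N => ‖∑ j ∈ Finset.range N, F j (η k)‖) atTop
        (nhds ‖T y (η k)‖) := (htendpt (η k)).norm
    refine ge_of_tendsto h2 ?_
    filter_upwards [eventually_gt_atTop k] with N hN
    exact hsumlow k N hN
  have hev : ∀ᶠ ξ : E in cocompact E, ‖T y ξ‖ < 1/4 := by
    have hzero : Tendsto (fun ξ : E => ‖T y ξ‖) (cocompact E) (nhds 0) := by
      simpa using (zero_at_infty (T y)).norm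
    have := Metric.tendsto_nhds.mp hzero (1/4) (by norm_num)
    refine this.mono fun ξ hξ => ?_
    simpa [Real.dist_eq, abs_of_nonneg (norm_nonneg _)] using hξ
  obtain ⟨K, hK, hKsub⟩ := hasBasis_cocompact.eventually_iff.mp hev
  obtain ⟨r, hr⟩ := hK.isBounded.subset_closedBall (0 : E)
  set k := ⌈max r 0⌉₊ + 1 with hk
  have hak : r < a k := by
    have h1 : (max r 0 : ℝ) ≤ (⌈max r 0⌉₊ : ℝ) := Nat.le_ceil _
    have h2 : (k : ℝ) ≤ a k := hage k
    have h3 : ((⌈max r 0⌉₊ : ℝ) + 1) = (k : ℝ) := by rw [hk]; push_cast; ring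
    have h4 : r ≤ max r 0 := le_max_left r 0
    linarith
  have hηK : η k ∉ K := by
    intro hmem
    have hmb := hr hmem
    rw [Metric.mem_closedBall, dist_zero_right] at hmb
    linarith [hηa k]
  have hfin : ‖T y (η k)‖ < 1/4 := hKsub hηK
  linarith [hTylow k]
end

section
/- Let X be a reflexive infinite-dimensional closed subspace of L¹(ℝⁿ). Then for every β > 0 and every C > 0 there exists f ∈ X with Σ_{Q ∈ 𝒬} |∫_{βQ} f| < C ‖f‖_{L¹}, where 𝒬 is the collection of unit cubes with integer corners and βQ denotes the cube scaled by β. -/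
open MeasureTheory NormedSpace

/-- The cube with integer corner `c` scaled by `β`. -/
def scaledCube {n : ℕ} (β : ℝ) (c : Fin n → ℤ) : Set (EuclideanSpace ℝ (Fin n)) :=
  {x | ∀ k, x k ∈ Set.Icc (β * (c k : ℝ)) (β * ((c k : ℝ) + 1))}

namespace CubeAux
variable {n : ℕ}

lemma measurableSet_scaledCube (β : ℝ) (c : Fin n → ℤ) :
    MeasurableSet (scaledCube β c) := by
  have : scaledCube β c = ⋂ k, (fun x : EuclideanSpace ℝ (Fin n) => x k) ⁻¹'
      Set.Icc (β * (c k : ℝ)) (β * ((c k : ℝ) + 1)) := by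
    ext x; simp [scaledCube, Set.mem_iInter]
  rw [this]
  exact MeasurableSet.iInter fun k =>
    ((continuous_apply k).comp (PiLp.continuous_ofLp 2 _)).measurable measurableSet_Icc

lemma volume_hyperplane (k : Fin n) (a : ℝ) :
    volume {x : EuclideanSpace ℝ (Fin n) | x k = a} = 0 := by
  have hmp := EuclideanSpace.volume_preserving_symm_measurableEquiv_toLp (Fin n)
  have h1 : {x : EuclideanSpace ℝ (Fin n) | x k = a} =
      (MeasurableEquiv.toLp 2 (Fin n → ℝ)).symm ⁻¹' {y : Fin n → ℝ | y k = a} := rfl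
  rw [h1, hmp.measure_preimage]
  · have h2 : {y : Fin n → ℝ | y k = a} =
        Set.univ.pi (fun i => if i = k then ({a} : Set ℝ) else Set.univ) := by
      ext y
      simp only [Set.mem_setOf_eq, Set.mem_pi, Set.mem_univ, forall_true_left]
      constructor
      · intro h i; by_cases hik : i = k <;> simp [hik, h]
      · intro h; have := h k; simpa using this
    rw [h2, volume_pi_pi]
    exact Finset.prod_eq_zero (Finset.mem_univ k) (by simp)
  · exact (MeasurableSet.preimage measurableSet_eq (measurable_pi_apply k)).nullMeasurableSet

lemma aedisjoint_scaledCube {β : ℝ} (hβ : 0 < β) :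
    Pairwise (fun c c' => MeasureTheory.AEDisjoint volume (scaledCube (n := n) β c) (scaledCube (n := n) β c')) := by
  intro c c' hne
  have hk : ∃ k, c k ≠ c' k := by
    by_contra h; push_neg at h; exact hne (funext h)
  obtain ⟨k, hk⟩ := hk
  have key : ∀ (d d' : Fin n → ℤ), d k < d' k →
      scaledCube β d ∩ scaledCube β d' ⊆ {x | x k = β * ((d k : ℝ) + 1)} := by
    intro d d' hlt x ⟨hx, hx'⟩
    have h1 := (hx k).2
    have h2 := (hx' k).1
    have : (d k : ℝ) + 1 ≤ (d' k : ℝ) := by exact_mod_cast hlt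
    have : β * ((d k : ℝ) + 1) ≤ β * (d' k : ℝ) :=
      mul_le_mul_of_nonneg_left this hβ.le
    exact le_antisymm h1 (le_trans this h2)
  rcases lt_or_gt_of_ne hk with h | h
  · exact measure_mono_null (key c c' h) (volume_hyperplane k _)
  · refine measure_mono_null ?_ (volume_hyperplane k (β * ((c' k : ℝ) + 1)))
    rw [Set.inter_comm] at *
    exact key c' c h

lemma iUnion_scaledCube {β : ℝ} (hβ : 0 < β) :
    (⋃ c : Fin n → ℤ, scaledCube (n := n) β c) = Set.univ := by
  ext x
  simp only [Set.mem_iUnion, Set.mem_univ, iff_true]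
  refine ⟨fun k => ⌊x k / β⌋, fun k => ?_⟩
  constructor
  · calc β * (⌊x k / β⌋ : ℝ) ≤ β * (x k / β) :=
        mul_le_mul_of_nonneg_left (Int.floor_le _) hβ.le
      _ = x k := by field_simp
  · calc x k = β * (x k / β) := by field_simp
      _ ≤ β * ((⌊x k / β⌋ : ℝ) + 1) :=
        mul_le_mul_of_nonneg_left (Int.lt_floor_add_one _).le hβ.le

lemma tsum_lintegral_scaledCube {β : ℝ} (hβ : 0 < β) (g : EuclideanSpace ℝ (Fin n) → ENNReal) :
    ∑' c : Fin n → ℤ, ∫⁻ x in scaledCube β c, g x = ∫⁻ x, g x := by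
  rw [← lintegral_iUnion₀ (fun c => (measurableSet_scaledCube β c).nullMeasurableSet)
    (aedisjoint_scaledCube hβ) g, iUnion_scaledCube hβ, Measure.restrict_univ]

variable {n : ℕ}

noncomputable abbrev L1E (n : ℕ) := Lp ℂ 1 (volume : Measure (EuclideanSpace ℝ (Fin n)))

lemma norm_setIntegral_le (f : L1E n) (s : Set (EuclideanSpace ℝ (Fin n))) :
    ‖∫ x in s, f x‖ ≤ (∫⁻ x in s, ‖f x‖₊).toReal := by
  calc ‖∫ x in s, f x‖ ≤ (∫⁻ x in s, ENNReal.ofReal ‖f x‖).toReal :=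
      norm_integral_le_lintegral_norm _
    _ = (∫⁻ x in s, ‖f x‖₊).toReal := by
      congr 1; exact lintegral_congr fun x => ofReal_norm _

lemma tsum_lintegral_eq (hβ : (0:ℝ) < β) (f : L1E n) :
    ∑' c : Fin n → ℤ, ∫⁻ x in scaledCube β c, (‖f x‖₊ : ENNReal) = ENNReal.ofReal ‖f‖ := by
  rw [tsum_lintegral_scaledCube hβ]
  rw [MeasureTheory.L1.norm_def f, ENNReal.ofReal_toReal]
  · rfl
  rw [← eLpNorm_one_eq_lintegral_enorm]; exact MeasureTheory.Lp.eLpNorm_ne_top f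

lemma summable_norm_setIntegral (hβ : (0:ℝ) < β) (f : L1E n) :
    Summable (fun c : Fin n → ℤ => ‖∫ x in scaledCube β c, f x‖) := by
  have hfin : ∑' c : Fin n → ℤ, ∫⁻ x in scaledCube β c, (‖f x‖₊ : ENNReal) ≠ ⊤ := by
    rw [tsum_lintegral_eq hβ f]; exact ENNReal.ofReal_ne_top
  refine Summable.of_nonneg_of_le (fun c => norm_nonneg _)
    (fun c => norm_setIntegral_le f _) (ENNReal.summable_toReal hfin)

lemma tsum_norm_setIntegral_le (hβ : (0:ℝ) < β) (f : L1E n) :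
    ∑' c : Fin n → ℤ, ‖∫ x in scaledCube β c, f x‖ ≤ ‖f‖ := by
  have hfin : ∑' c : Fin n → ℤ, ∫⁻ x in scaledCube β c, (‖f x‖₊ : ENNReal) ≠ ⊤ := by
    rw [tsum_lintegral_eq hβ f]; exact ENNReal.ofReal_ne_top
  have hne : ∀ c : Fin n → ℤ, (∫⁻ x in scaledCube β c, (‖f x‖₊ : ENNReal)) ≠ ⊤ :=
    fun c => ne_top_of_le_ne_top hfin (ENNReal.le_tsum c)
  calc ∑' c : Fin n → ℤ, ‖∫ x in scaledCube β c, f x‖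
      ≤ ∑' c : Fin n → ℤ, (∫⁻ x in scaledCube β c, (‖f x‖₊ : ENNReal)).toReal :=
        Summable.tsum_le_tsum (fun c => norm_setIntegral_le f _)
          (summable_norm_setIntegral hβ f) (ENNReal.summable_toReal hfin)
    _ = (∑' c : Fin n → ℤ, ∫⁻ x in scaledCube β c, (‖f x‖₊ : ENNReal)).toReal :=
        (ENNReal.tsum_toReal_eq hne).symm
    _ = ‖f‖ := by rw [tsum_lintegral_eq hβ f]; exact ENNReal.toReal_ofReal (norm_nonneg f)

/-- The set-integral over a cube as a continuous linear functional on `L¹`. -/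
noncomputable def cubeCLM (β : ℝ) (c : Fin n → ℤ) : L1E n →L[ℂ] ℂ :=
  LinearMap.mkContinuous
    { toFun := fun f => ∫ x in scaledCube β c, f x
      map_add' := fun f g => by
        have h1 : ((f + g : L1E n) : EuclideanSpace ℝ (Fin n) → ℂ)
            =ᵐ[(volume : Measure (EuclideanSpace ℝ (Fin n))).restrict (scaledCube β c)]
            fun x => f x + g x :=
          ae_restrict_of_ae (MeasureTheory.Lp.coeFn_add f g)
        simp only [integral_congr_ae h1]
        exact integral_add ((L1.integrable_coeFn f).integrableOn)
          ((L1.integrable_coeFn g).integrableOn)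
      map_smul' := fun a f => by
        have h1 : ((a • f : L1E n) : EuclideanSpace ℝ (Fin n) → ℂ)
            =ᵐ[(volume : Measure (EuclideanSpace ℝ (Fin n))).restrict (scaledCube β c)]
            fun x => a • (f x) :=
          ae_restrict_of_ae (MeasureTheory.Lp.coeFn_smul a f)
        simp only [integral_congr_ae h1, integral_smul]
        rfl }
    1 (fun f => by
      rw [one_mul]
      calc ‖∫ x in scaledCube β c, f x‖ ≤ (∫⁻ x in scaledCube β c, ‖f x‖₊).toReal :=
          norm_setIntegral_le f _
        _ ≤ (∫⁻ x, ‖f x‖₊).toReal := by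
          refine ENNReal.toReal_mono ?_ (setLIntegral_le_lintegral _ _)
          change ∫⁻ x, ‖f x‖ₑ ≠ ⊤; rw [← eLpNorm_one_eq_lintegral_enorm]; exact MeasureTheory.Lp.eLpNorm_ne_top f
        _ = ‖f‖ := (MeasureTheory.L1.norm_def f).symm)

@[simp] lemma cubeCLM_apply (β : ℝ) (c : Fin n → ℤ) (f : L1E n) :
    cubeCLM β c f = ∫ x in scaledCube β c, f x := rfl


/-- unit scalar turning `z` into `‖z‖`. -/
noncomputable def sgn (z : ℂ) : ℂ := if z = 0 then 1 else (‖z‖ : ℂ) / z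

lemma norm_sgn (z : ℂ) : ‖sgn z‖ = 1 := by
  unfold sgn
  split_ifs with h
  · simp
  · rw [norm_div, Complex.norm_real, norm_norm, div_self (norm_ne_zero_iff.2 h)]

lemma sgn_mul (z : ℂ) : sgn z * z = (‖z‖ : ℂ) := by
  unfold sgn
  split_ifs with h
  · simp [h]
  · rw [div_mul_cancel₀ _ h]

/-- Sum of a sequence of functionals with uniformly `ℓ¹`-bounded evaluations. -/
noncomputable def sumCLM {E : Type*} [NormedAddCommGroup E] [NormedSpace ℂ E]
    (ψ : ℕ → E →L[ℂ] ℂ)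
    (h : ∀ g : E, ∀ m : ℕ, ∑ j ∈ Finset.range m, ‖ψ j g‖ ≤ ‖g‖) : E →L[ℂ] ℂ :=
  have hs : ∀ g : E, Summable fun j => ψ j g := fun g =>
    Summable.of_norm (summable_of_sum_range_le (fun j => norm_nonneg _) (h g))
  LinearMap.mkContinuous
    { toFun := fun g => ∑' j, ψ j g
      map_add' := fun a b => by
        simp only [map_add]
        exact Summable.tsum_add (hs a) (hs b)
      map_smul' := fun a g => by
        simp only [ContinuousLinearMap.map_smul, smul_eq_mul, RingHom.id_apply]
        exact tsum_mul_left
      }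
    1 (fun g => by
      rw [one_mul]
      have hsn : Summable fun j => ‖ψ j g‖ :=
        summable_of_sum_range_le (fun j => norm_nonneg _) (h g)
      calc ‖∑' j, ψ j g‖ ≤ ∑' j, ‖ψ j g‖ := norm_tsum_le_tsum_norm hsn
        _ ≤ ‖g‖ := Summable.tsum_le_of_sum_range_le hsn (h g))

lemma sumCLM_apply {E : Type*} [NormedAddCommGroup E] [NormedSpace ℂ E]
    (ψ : ℕ → E →L[ℂ] ℂ) (h) (g : E) : sumCLM ψ h g = ∑' j, ψ j g := rfl

/-- Gliding-hump recursion skeleton. -/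
def glide {α γ : Type*} [DecidableEq γ] (step : Finset γ → α × Finset γ) :
    ℕ → Finset γ × (α × Finset γ)
  | 0 => (∅, step ∅)
  | j+1 => ((glide step j).1 ∪ (glide step j).2.2,
      step ((glide step j).1 ∪ (glide step j).2.2))

lemma glide_snd {α γ : Type*} [DecidableEq γ] (step : Finset γ → α × Finset γ) (j : ℕ) :
    (glide step j).2 = step (glide step j).1 := by cases j <;> rfl

lemma glide_fst_succ {α γ : Type*} [DecidableEq γ] (step : Finset γ → α × Finset γ) (j : ℕ) :
    (glide step (j+1)).1 = (glide step j).1 ∪ (glide step j).2.2 := rfl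

lemma glide_fst_mono {α γ : Type*} [DecidableEq γ] (step : Finset γ → α × Finset γ)
    {j k : ℕ} (h : j ≤ k) : (glide step j).1 ⊆ (glide step k).1 := by
  induction k with
  | zero => simp [Nat.le_zero.1 h]
  | succ k ih =>
    rcases Nat.lt_or_ge j (k+1) with h' | h'
    · exact (ih (Nat.lt_succ_iff.1 h')).trans
        (by rw [glide_fst_succ]; exact Finset.subset_union_left)
    · have : j = k + 1 := le_antisymm h h'
      simp [this]

lemma tail_selection {ι : Type*} {u : ι → ℝ} (hsum : Summable u)
    {ε : ℝ} (hε : 0 < ε) : ∃ s : Finset ι, ∑' i, u i ≤ ∑ i ∈ s, u i + ε := by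
  have ht := hsum.hasSum
  have : ∀ᶠ s : Finset ι in Filter.atTop, (∑' i, u i) - ε < ∑ i ∈ s, u i :=
    ht.eventually (eventually_gt_nhds (by linarith))
  obtain ⟨s, hs⟩ := this.exists
  exact ⟨s, by linarith⟩

variable {E : Type*} [NormedAddCommGroup E] [NormedSpace ℂ E]
  {ι : Type*} [DecidableEq ι]

lemma exists_unit_in_kernels (φ : ι → E →L[ℂ] ℂ) (X : Subspace ℂ E)
    (hinf : ¬ FiniteDimensional ℂ ↥X) (G : Finset ι) :
    ∃ f : E, f ∈ X ∧ ‖f‖ = 1 ∧ ∀ c ∈ G, φ c f = 0 := by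
  classical
  set L : ↥X →ₗ[ℂ] (↥G → ℂ) :=
    { toFun := fun v c => φ c.1 (v : E)
      map_add' := fun v w => by
        ext c; simp only [Submodule.coe_add, map_add, Pi.add_apply]
      map_smul' := fun a v => by
        ext c
        simp only [SetLike.val_smul, ContinuousLinearMap.map_smul, Pi.smul_apply,
          RingHom.id_apply] } with hL
  have hninj : ¬ Function.Injective L := fun hinj =>
    hinf (FiniteDimensional.of_injective L hinj)
  have hker : LinearMap.ker L ≠ ⊥ := fun h => hninj (LinearMap.ker_eq_bot.1 h)
  obtain ⟨v, hvmem, hvne⟩ := Submodule.exists_mem_ne_zero_of_ne_bot hker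
  have hv0 : L v = 0 := hvmem
  have hvE : (v : E) ≠ 0 := fun h => hvne (Subtype.ext h)
  have hnorm : ‖(v : E)‖ ≠ 0 := norm_ne_zero_iff.2 hvE
  refine ⟨((‖(v : E)‖)⁻¹ : ℂ) • (v : E), X.smul_mem _ v.2, ?_, ?_⟩
  · rw [norm_smul]
    simp [norm_inv, inv_mul_cancel₀ hnorm]
  · intro c hc
    have h0 : φ c (v : E) = 0 := by
      have := congrFun hv0 ⟨c, hc⟩
      simpa [hL] using this
    rw [ContinuousLinearMap.map_smul, h0, smul_zero]

lemma step_exists (φ : ι → E →L[ℂ] ℂ) (X : Subspace ℂ E)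
    (hinf : ¬ FiniteDimensional ℂ ↥X)
    (hsummg : ∀ g : E, Summable fun c => ‖φ c g‖)
    {C : ℝ} (hC : 0 < C)
    (hyp : ∀ f, f ∈ X → C * ‖f‖ ≤ ∑' c, ‖φ c f‖)
    (G : Finset ι) :
    ∃ p : E × Finset ι, p.1 ∈ X ∧ ‖p.1‖ = 1 ∧
      (∀ c ∈ G, φ c p.1 = 0) ∧ Disjoint p.2 G ∧
      C - C/8 ≤ ∑ c ∈ p.2, ‖φ c p.1‖ ∧
      (∑' c, ‖φ c p.1‖) ≤ ∑ c ∈ p.2, ‖φ c p.1‖ + C/8 := by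
  classical
  obtain ⟨f, hfX, hf1, hfker⟩ := exists_unit_in_kernels φ X hinf G
  obtain ⟨F₀, hF₀⟩ := tail_selection (hsummg f) (show (0:ℝ) < C/8 by linarith)
  have hCle : C ≤ ∑' c, ‖φ c f‖ := by
    have := hyp f hfX; rwa [hf1, mul_one] at this
  have hsub : ∑ c ∈ F₀ \ G, ‖φ c f‖ = ∑ c ∈ F₀, ‖φ c f‖ := by
    apply Finset.sum_subset Finset.sdiff_subset
    intro c hc hcn
    have hcG : c ∈ G := by
      by_contra h
      exact hcn (Finset.mem_sdiff.2 ⟨hc, h⟩)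
    rw [hfker c hcG, norm_zero]
  refine ⟨(f, F₀ \ G), hfX, hf1, hfker, Finset.sdiff_disjoint, ?_, ?_⟩
  · simp only
    rw [hsub]; linarith
  · simp only
    rw [hsub]; linarith

set_option maxHeartbeats 1000000 in
lemma abstract_contra (φ : ι → E →L[ℂ] ℂ) (X : Subspace ℂ E)
    (hrefl : Function.Surjective (inclusionInDoubleDual ℂ ↥X))
    (hinf : ¬ FiniteDimensional ℂ ↥X)
    (hsummg : ∀ g : E, Summable fun c => ‖φ c g‖)
    (htsumle : ∀ g : E, (∑' c, ‖φ c g‖) ≤ ‖g‖)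
    {C : ℝ} (hC : 0 < C)
    (hyp : ∀ f, f ∈ X → C * ‖f‖ ≤ ∑' c, ‖φ c f‖) : False := by
  classical
  choose step hmem0 hnorm0 hker0 hdisj0 hlow0 htail0 using
    step_exists φ X hinf hsummg hC hyp
  set G : ℕ → Finset ι := fun j => (glide step j).1 with hGdef
  set f : ℕ → E := fun j => (step (G j)).1 with hfdef
  set F : ℕ → Finset ι := fun j => (step (G j)).2 with hFdef
  have hmem : ∀ j, f j ∈ X := fun j => hmem0 (G j)
  have hnorm1 : ∀ j, ‖f j‖ = 1 := fun j => hnorm0 (G j)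
  have hker : ∀ j, ∀ c ∈ G j, φ c (f j) = 0 := fun j => hker0 (G j)
  have hdisjFG : ∀ j, Disjoint (F j) (G j) := fun j => hdisj0 (G j)
  have hlow : ∀ j, C - C/8 ≤ ∑ c ∈ F j, ‖φ c (f j)‖ := fun j => hlow0 (G j)
  have htail : ∀ j, (∑' c, ‖φ c (f j)‖) ≤ ∑ c ∈ F j, ‖φ c (f j)‖ + C/8 :=
    fun j => htail0 (G j)
  -- basic combinatorics of the recursion
  have hGsucc : ∀ j, G (j+1) = G j ∪ F j := by
    intro j
    show (glide step j).1 ∪ (glide step j).2.2 = (glide step j).1 ∪ (step (G j)).2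
    rw [glide_snd step j]
  have hFsubG : ∀ k j, k < j → F k ⊆ G j := by
    intro k j hkj
    have h1 : F k ⊆ G (k+1) := by rw [hGsucc k]; exact Finset.subset_union_right
    exact h1.trans (glide_fst_mono step hkj)
  have hFdisj : ∀ k j, k ≠ j → Disjoint (F k) (F j) := by
    intro k j hne
    rcases lt_or_gt_of_ne hne with h | h
    · exact ((hdisjFG j).mono_right (hFsubG k j h)).symm
    · exact (hdisjFG k).mono_right (hFsubG j k h)
  have hkerF : ∀ k j, k < j → ∀ c ∈ F k, φ c (f j) = 0 :=
    fun k j hkj c hc => hker j c (hFsubG k j hkj hc)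
  -- the block functionals
  have hψex : ∃ ψ : ℕ → E →L[ℂ] ℂ, ∀ j g,
      ψ j g = ∑ c ∈ F j, sgn (φ c (f j)) * φ c g := by
    refine ⟨fun j => ∑ c ∈ F j, sgn (φ c (f j)) • φ c, fun j g => ?_⟩
    simp only [ContinuousLinearMap.coe_sum', Finset.sum_apply,
      ContinuousLinearMap.coe_smul', Pi.smul_apply, smul_eq_mul]
  obtain ⟨ψ, hψapp⟩ := hψex
  have hψb : ∀ j g, ‖ψ j g‖ ≤ ∑ c ∈ F j, ‖φ c g‖ := by
    intro j g
    rw [hψapp]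
    refine (norm_sum_le _ _).trans (Finset.sum_le_sum fun c _ => ?_)
    rw [norm_mul, norm_sgn, one_mul]
  have hψself : ∀ j, ψ j (f j) = ((∑ c ∈ F j, ‖φ c (f j)‖ : ℝ) : ℂ) := by
    intro j
    rw [hψapp]
    rw [Complex.ofReal_sum]
    exact Finset.sum_congr rfl fun c _ => sgn_mul _
  have hψzero : ∀ k j, k < j → ψ k (f j) = 0 := by
    intro k j hkj
    rw [hψapp]
    exact Finset.sum_eq_zero fun c hc => by rw [hkerF k j hkj c hc, mul_zero]
  -- the summed functional
  have hb : ∀ g : E, ∀ m : ℕ, ∑ j ∈ Finset.range m, ‖ψ j g‖ ≤ ‖g‖ := by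
    intro g m
    have hpd : (↑(Finset.range m) : Set ℕ).PairwiseDisjoint F :=
      fun k _ j _ hne => hFdisj k j hne
    calc ∑ j ∈ Finset.range m, ‖ψ j g‖
        ≤ ∑ j ∈ Finset.range m, ∑ c ∈ F j, ‖φ c g‖ :=
          Finset.sum_le_sum fun j _ => hψb j g
      _ = ∑ c ∈ (Finset.range m).biUnion F, ‖φ c g‖ :=
          (Finset.sum_biUnion hpd).symm
      _ ≤ ∑' c, ‖φ c g‖ :=
          Summable.sum_le_tsum _ (fun c _ => norm_nonneg _) (hsummg g)
      _ ≤ ‖g‖ := htsumle g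
  have hΦex : ∃ Φ : E →L[ℂ] ℂ, (∀ g, Φ g = ∑' j, ψ j g) := ⟨sumCLM ψ hb, fun g => rfl⟩
  obtain ⟨Φ, hΦapp⟩ := hΦex
  have hsψ : ∀ g : E, Summable fun j => ‖ψ j g‖ :=
    fun g => summable_of_sum_range_le (fun j => norm_nonneg _) (hb g)
  -- tail bound
  have hTail : ∀ j : ℕ, (∑' i : ℕ, ‖ψ (i + (j+1)) (f j)‖) ≤ C/8 := by
    intro j
    have hsub : Summable fun i : ℕ => ‖ψ (i + (j+1)) (f j)‖ :=
      (summable_nat_add_iff (f := fun k => ‖ψ k (f j)‖) (j+1)).2 (hsψ (f j))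
    refine Summable.tsum_le_of_sum_range_le hsub ?_
    intro m
    set S : Finset ι := (Finset.range m).biUnion (fun i => F (i + (j+1))) with hSdef
    have hpd : (↑(Finset.range m) : Set ℕ).PairwiseDisjoint (fun i => F (i + (j+1))) :=
      fun k _ l _ hne => hFdisj _ _ (by omega)
    have hSdisj : Disjoint S (F j) := by
      rw [hSdef, Finset.disjoint_biUnion_left]
      exact fun i _ => hFdisj _ j (by omega)
    have hkey : ∑ c ∈ S, ‖φ c (f j)‖ + ∑ c ∈ F j, ‖φ c (f j)‖ ≤
        ∑ c ∈ F j, ‖φ c (f j)‖ + C/8 := by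
      calc ∑ c ∈ S, ‖φ c (f j)‖ + ∑ c ∈ F j, ‖φ c (f j)‖
          = ∑ c ∈ S ∪ F j, ‖φ c (f j)‖ := (Finset.sum_union hSdisj).symm
        _ ≤ ∑' c, ‖φ c (f j)‖ :=
            Summable.sum_le_tsum _ (fun c _ => norm_nonneg _) (hsummg (f j))
        _ ≤ _ := htail j
    have hS : ∑ c ∈ S, ‖φ c (f j)‖ ≤ C/8 := by linarith
    calc ∑ i ∈ Finset.range m, ‖ψ (i + (j+1)) (f j)‖
        ≤ ∑ i ∈ Finset.range m, ∑ c ∈ F (i + (j+1)), ‖φ c (f j)‖ :=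
          Finset.sum_le_sum fun i _ => hψb _ _
      _ = ∑ c ∈ S, ‖φ c (f j)‖ := (Finset.sum_biUnion hpd).symm
      _ ≤ C/8 := hS
  -- lower bound for the real part
  have hRe : ∀ j : ℕ, C - C/4 ≤ (Φ (f j)).re := by
    intro j
    have hsum : Summable fun k => ψ k (f j) := Summable.of_norm (hsψ (f j))
    have hsplit := Summable.sum_add_tsum_nat_add (f := fun k => ψ k (f j)) (j+1) hsum
    have hfin : ∑ k ∈ Finset.range (j+1), ψ k (f j) = ψ j (f j) := by
      refine Finset.sum_eq_single_of_mem j (Finset.self_mem_range_succ j) ?_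
      intro k hk hkj
      exact hψzero k j (lt_of_le_of_ne (Nat.lt_succ_iff.1 (Finset.mem_range.1 hk)) hkj)
    have hΦ : Φ (f j) = ψ j (f j) + ∑' i : ℕ, ψ (i + (j+1)) (f j) := by
      rw [hΦapp, ← hsplit, hfin]
    have hT : ‖∑' i : ℕ, ψ (i + (j+1)) (f j)‖ ≤ C/8 :=
      (norm_tsum_le_tsum_norm ((summable_nat_add_iff (f := fun k => ‖ψ k (f j)‖) (j+1)).2 (hsψ (f j)))).trans (hTail j)
    have hre : (Φ (f j)).re = (∑ c ∈ F j, ‖φ c (f j)‖) +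
        (∑' i : ℕ, ψ (i + (j+1)) (f j)).re := by
      rw [hΦ, hψself j, Complex.add_re, Complex.ofReal_re]
    have habs : |(∑' i : ℕ, ψ (i + (j+1)) (f j)).re| ≤ C/8 :=
      (Complex.abs_re_le_norm _).trans hT
    have h1 := hlow j
    rw [hre]
    have := abs_le.1 habs
    linarith
  -- pass to the subspace and its bidual
  set u : ℕ → ↥X := fun j => ⟨f j, hmem j⟩ with hudef
  set v :=
    fun j => StrongDual.toWeakDual (inclusionInDoubleDual ℂ ↥X (u j)) with hvdef
  have hvK : ∀ j, v j ∈ (⇑WeakDual.toStrongDual ⁻¹' Metric.closedBall 0 1) := by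
    intro j
    refine (mem_closedBall_zero_iff (a := WeakDual.toStrongDual (v j))).2 ?_
    calc ‖WeakDual.toStrongDual (v j)‖ = ‖inclusionInDoubleDual ℂ ↥X (u j)‖ := rfl
      _ ≤ ‖u j‖ := double_dual_bound ℂ ↥X (u j)
      _ = ‖f j‖ := rfl
      _ = 1 := hnorm1 j
  have hK := WeakDual.isCompact_closedBall (𝕜 := ℂ) (E := StrongDual ℂ ↥X) 0 1
  have hle : Filter.map v Filter.atTop ≤
      Filter.principal (⇑WeakDual.toStrongDual ⁻¹' Metric.closedBall 0 1) :=
    Filter.le_principal_iff.2 (Filter.mem_map.2 (Filter.univ_mem' hvK))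
  obtain ⟨Ξ, hΞK, hΞ⟩ := hK hle
  have happly : ∀ (j : ℕ) (ψ₀ : StrongDual ℂ ↥X), (v j) ψ₀ = ψ₀ (u j) := fun j ψ₀ => rfl
  have hclψ : ∀ ψ₀ : StrongDual ℂ ↥X,
      ClusterPt (Ξ ψ₀) (Filter.map (fun j => ψ₀ (u j)) Filter.atTop) := by
    intro ψ₀
    have hc : ContinuousAt (fun Ξ' : WeakDual ℂ (StrongDual ℂ ↥X) => Ξ' ψ₀) Ξ :=
      (WeakDual.eval_continuous ψ₀).continuousAt
    have ht : Filter.Tendsto (fun Ξ' : WeakDual ℂ (StrongDual ℂ ↥X) => Ξ' ψ₀)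
        (Filter.map v Filter.atTop)
        (Filter.map (fun j => (v j) ψ₀) Filter.atTop) :=
      Filter.tendsto_map'_iff.2 Filter.tendsto_map
    have := hΞ.map hc ht
    simpa only [happly] using this
  -- the cluster point kills every block functional
  have hzero : ∀ k : ℕ, Ξ ((ψ k).comp X.subtypeL) = 0 := by
    intro k
    have hev : (fun j => ((ψ k).comp X.subtypeL) (u j)) =ᶠ[Filter.atTop]
        (fun _ => (0 : ℂ)) := by
      refine Filter.eventually_atTop.2 ⟨k+1, fun j hj => ?_⟩
      have : ψ k (f j) = 0 := hψzero k j (by omega)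
      simpa using this
    have htend : Filter.Tendsto (fun j => ((ψ k).comp X.subtypeL) (u j))
        Filter.atTop (nhds 0) := Filter.Tendsto.congr' hev.symm tendsto_const_nhds
    have hcl := hclψ ((ψ k).comp X.subtypeL)
    have hneb : (nhds (Ξ ((ψ k).comp X.subtypeL)) ⊓ nhds (0 : ℂ)).NeBot :=
      hcl.mono htend
    exact t2_iff_nhds.1 inferInstance hneb
  -- and has large real part on the summed functional
  have hlarge : C - C/4 ≤ (Ξ (Φ.comp X.subtypeL)).re := by
    have hcl := hclψ (Φ.comp X.subtypeL)
    have hcl2 : ClusterPt ((Ξ (Φ.comp X.subtypeL)).re)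
        (Filter.map (fun j => ((Φ.comp X.subtypeL) (u j)).re) Filter.atTop) := by
      have ht : Filter.Tendsto Complex.re
          (Filter.map (fun j => (Φ.comp X.subtypeL) (u j)) Filter.atTop)
          (Filter.map (fun j => ((Φ.comp X.subtypeL) (u j)).re) Filter.atTop) :=
        Filter.tendsto_map'_iff.2 Filter.tendsto_map
      exact hcl.map Complex.continuous_re.continuousAt ht
    have hmem' : Filter.map (fun j => ((Φ.comp X.subtypeL) (u j)).re) Filter.atTop ≤
        Filter.principal (Set.Ici (C - C/4)) := by
      refine Filter.le_principal_iff.2 (Filter.mem_map.2 (Filter.univ_mem' fun j => ?_))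
      have : C - C/4 ≤ (Φ (f j)).re := hRe j
      simpa using this
    have := mem_closure_iff_clusterPt.2 (hcl2.mono hmem')
    rwa [closure_Ici, Set.mem_Ici] at this
  -- reflexivity gives a contradiction
  obtain ⟨w, hw⟩ := hrefl (WeakDual.toStrongDual Ξ)
  have hval : ∀ ψ₀ : StrongDual ℂ ↥X, Ξ ψ₀ = ψ₀ w := by
    intro ψ₀
    calc Ξ ψ₀ = (WeakDual.toStrongDual Ξ) ψ₀ := rfl
      _ = (inclusionInDoubleDual ℂ ↥X w) ψ₀ := by rw [hw]
      _ = ψ₀ w := dual_def ℂ ↥X w ψ₀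
  have hψw : ∀ k : ℕ, ψ k (X.subtypeL w) = 0 := by
    intro k
    have := hzero k
    rw [hval ((ψ k).comp X.subtypeL)] at this
    simpa using this
  have hΦw : Φ (X.subtypeL w) = 0 := by
    rw [hΦapp]
    have : (fun k => ψ k (X.subtypeL w)) = fun _ => (0 : ℂ) := funext hψw
    rw [this, tsum_zero]
  have : C - C/4 ≤ (0 : ℝ) := by
    have h1 := hlarge
    rw [hval (Φ.comp X.subtypeL)] at h1
    have h2 : (Φ.comp X.subtypeL) w = Φ (X.subtypeL w) := rfl
    rw [h2, hΦw] at h1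
    simpa using h1
  linarith

end CubeAux

/-- If `X` is a reflexive infinite-dimensional closed subspace of `L¹(ℝⁿ)`,
then for all `β, C > 0` there is `f ∈ X` with
`Σ_Q |∫_{βQ} f| < C ‖f‖_{L¹}`, the sum over the grid of cubes of side `β`. -/
theorem exists_small_cube_sums {n : ℕ}
    (X : Subspace ℂ (Lp ℂ 1 (volume : Measure (EuclideanSpace ℝ (Fin n)))))
    (hclosed : IsClosed (X : Set (Lp ℂ 1 (volume : Measure (EuclideanSpace ℝ (Fin n))))))
    (hrefl : IsReflexiveSpace ↥X) (hinf : ¬ FiniteDimensional ℂ ↥X) :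
    ∀ β > (0 : ℝ), ∀ C > (0 : ℝ), ∃ f ∈ X,
      (∑' c : Fin n → ℤ, ‖∫ x in scaledCube β c, f x‖) < C * ‖f‖ := by
  intro β hβ C hC
  by_contra hcon
  push_neg at hcon
  exact CubeAux.abstract_contra (CubeAux.cubeCLM β) X hrefl hinf
    (fun g => by
      simpa only [CubeAux.cubeCLM_apply] using CubeAux.summable_norm_setIntegral hβ g)
    (fun g => by
      simpa only [CubeAux.cubeCLM_apply] using CubeAux.tsum_norm_setIntegral_le hβ g)
    hC
    (fun f hf => by
      simpa only [CubeAux.cubeCLM_apply] using hcon f hf)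
end
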